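/- Consider the linear diffusive-dispersive augmented system u*(v)_t + f*(v)_x = ε B v_{xx} + ε² K v_{xxx} with B, K constant N×N matrices, K symmetric. Then every C³ solution v(t,x) satisfies the exact entropy balance U*(v)_t + ( F*(v) − ε vᵀ B v_x + (ε²/2)(3 v_xᵀ K v_x − (vᵀ K v)_{xx}) )_x = −(ε/2) v_xᵀ (B + Bᵀ) v_x. In particular, if B + Bᵀ is positive semidefinite the right-hand side is ≤ 0. -/

import Mathlib

open Matrix

lemma hasDerivAt_dotMul {N : ℕ} (M : Matrix (Fin N) (Fin N) ℝ)
    {f g : ℝ → Fin N → ℝ} {f' g' : Fin N → ℝ} {x : ℝ}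
    (hf : HasDerivAt f f' x) (hg : HasDerivAt g g' x) :
    HasDerivAt (fun y => f y ⬝ᵥ M.mulVec (g y))
      (f' ⬝ᵥ M.mulVec (g x) + f x ⬝ᵥ M.mulVec g') x := by
  have hfi : ∀ i, HasDerivAt (fun y => f y i) (f' i) x := fun i =>
    ((ContinuousLinearMap.proj i : ((Fin N → ℝ) →L[ℝ] ℝ)).hasFDerivAt.comp_hasDerivAt x hf)
  have hgi : ∀ i, HasDerivAt (fun y => g y i) (g' i) x := fun i =>
    ((ContinuousLinearMap.proj i : ((Fin N → ℝ) →L[ℝ] ℝ)).hasFDerivAt.comp_hasDerivAt x hg)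
  have h : HasDerivAt (fun y => ∑ i, f y i * ∑ j, M i j * g y j)
      (∑ i, (f' i * ∑ j, M i j * g x j + f x i * ∑ j, M i j * g' j)) x := by
    apply HasDerivAt.fun_sum
    intro i _
    exact (hfi i).mul (HasDerivAt.fun_sum fun j _ => ((hgi j).const_mul (M i j)))
  simpa [dotProduct, Matrix.mulVec, Finset.sum_add_distrib] using h

lemma dot_transpose_helper {N : ℕ} (A : Matrix (Fin N) (Fin N) ℝ) (x y : Fin N → ℝ) :
    x ⬝ᵥ Aᵀ.mulVec y = y ⬝ᵥ A.mulVec x := by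
  rw [Matrix.dotProduct_mulVec, Matrix.vecMul_transpose, dotProduct_comm]

lemma dot_symm_helper {N : ℕ} {K : Matrix (Fin N) (Fin N) ℝ} (hK : K.IsSymm)
    (x y : Fin N → ℝ) : x ⬝ᵥ K.mulVec y = y ⬝ᵥ K.mulVec x := by
  conv_lhs => rw [← hK]
  exact dot_transpose_helper K x y


/-- Proposition 1 (LeFloch–Tesdall): for the linear diffusive-dispersive augmented
system `u*(v)_t + f*(v)_x = ε B v_{xx} + ε² K v_{xxx}` with constant matrices `B, K`,
`K` symmetric, every C³ solution `v(t,x)` satisfies the exact entropy balance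
`U*(v)_t + ( F*(v) − ε vᵀ B v_x + (ε²/2)(3 v_xᵀ K v_x − (vᵀ K v)_{xx}) )_x
  = −(ε/2) v_xᵀ (B + Bᵀ) v_x`,
and if `B + Bᵀ` is positive semidefinite, the right-hand side is `≤ 0`.
The entropy structure is encoded by the duality relations
`DU*(w)·x = wᵀ (Du*(w)·x)` and `DF*(w)·x = wᵀ (Df*(w)·x)`. -/
theorem linear_diffusion_dispersion_entropy_balance {N : ℕ}
    (ustar fstar : (Fin N → ℝ) → Fin N → ℝ)
    (Ustar Fstar : (Fin N → ℝ) → ℝ)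
    (hustar : ContDiff ℝ 1 ustar) (hfstar : ContDiff ℝ 1 fstar)
    (hUstar : ContDiff ℝ 1 Ustar) (hFstar : ContDiff ℝ 1 Fstar)
    (hdualU : ∀ w x, fderiv ℝ Ustar w x = ∑ i, w i * fderiv ℝ ustar w x i)
    (hdualF : ∀ w x, fderiv ℝ Fstar w x = ∑ i, w i * fderiv ℝ fstar w x i)
    (B K : Matrix (Fin N) (Fin N) ℝ) (hK : K.IsSymm)
    (ε : ℝ) (hε : 0 < ε)
    (v : ℝ → ℝ → Fin N → ℝ)
    (hv : ContDiff ℝ 3 (fun p : ℝ × ℝ => v p.1 p.2))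
    (hPDE : ∀ t x, deriv (fun s => ustar (v s x)) t + deriv (fun y => fstar (v t y)) x
      = ε • B.mulVec (deriv (deriv (v t)) x)
        + ε ^ 2 • K.mulVec (deriv (deriv (deriv (v t))) x)) :
    (∀ t x,
      deriv (fun s => Ustar (v s x)) t
        + deriv (fun y => Fstar (v t y)
            - ε * (v t y ⬝ᵥ B.mulVec (deriv (v t) y))
            + ε ^ 2 / 2 * (3 * (deriv (v t) y ⬝ᵥ K.mulVec (deriv (v t) y))
                - deriv (deriv (fun z => v t z ⬝ᵥ K.mulVec (v t z))) y)) x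
      = -(ε / 2) * (deriv (v t) x ⬝ᵥ (B + Bᵀ).mulVec (deriv (v t) x)))
    ∧ ((B + Bᵀ).PosSemidef → ∀ t x,
        -(ε / 2) * (deriv (v t) x ⬝ᵥ (B + Bᵀ).mulVec (deriv (v t) x)) ≤ 0) := by
  constructor
  · intro t x
    -- smoothness of v t in x
    have hvt3 : ContDiff ℝ 3 (v t) := hv.comp (contDiff_const.prodMk contDiff_id)
    have e32 : (3 : WithTop ℕ∞) = 2 + 1 := by norm_num
    have e21 : (2 : WithTop ℕ∞) = 1 + 1 := by norm_num
    have hd0 : Differentiable ℝ (v t) := hvt3.differentiable (by norm_num)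
    have h2 : ContDiff ℝ 2 (deriv (v t)) := by
      rw [e32] at hvt3; exact (contDiff_succ_iff_deriv.mp hvt3).2.2
    have h1 : ContDiff ℝ 1 (deriv (deriv (v t))) := by
      rw [e21] at h2; exact (contDiff_succ_iff_deriv.mp h2).2.2
    have hdg : ∀ y, HasDerivAt (v t) (deriv (v t) y) y := fun y => (hd0 y).hasDerivAt
    have hdg1 : ∀ y, HasDerivAt (deriv (v t)) (deriv (deriv (v t)) y) y := fun y =>
      ((h2.differentiable (by norm_num)) y).hasDerivAt
    have hdg2 : ∀ y, HasDerivAt (deriv (deriv (v t))) (deriv (deriv (deriv (v t))) y) y :=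
      fun y => ((h1.differentiable (by norm_num)) y).hasDerivAt
    -- smoothness in t
    have hvs : HasDerivAt (fun s => v s x) (deriv (fun s => v s x) t) t := by
      have hd : Differentiable ℝ (fun s => v s x) :=
        (hv.comp (contDiff_id.prodMk contDiff_const)).differentiable (by norm_num)
      exact (hd t).hasDerivAt
    set w := v t x with hw
    set vt := deriv (fun s => v s x) t with hvtd
    set g1 := deriv (v t) x with hg1
    set g2 := deriv (deriv (v t)) x with hg2
    set g3 := deriv (deriv (deriv (v t))) x with hg3
    have hU : HasDerivAt (fun s => Ustar (v s x)) (fderiv ℝ Ustar w vt) t :=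
      ((hUstar.differentiable one_ne_zero w).hasFDerivAt).comp_hasDerivAt t hvs
    have hu : HasDerivAt (fun s => ustar (v s x)) (fderiv ℝ ustar w vt) t :=
      ((hustar.differentiable one_ne_zero w).hasFDerivAt).comp_hasDerivAt t hvs
    have hF : HasDerivAt (fun y => Fstar (v t y)) (fderiv ℝ Fstar w g1) x :=
      ((hFstar.differentiable one_ne_zero w).hasFDerivAt).comp_hasDerivAt x (hdg x)
    have hf2 : HasDerivAt (fun y => fstar (v t y)) (fderiv ℝ fstar w g1) x :=
      ((hfstar.differentiable one_ne_zero w).hasFDerivAt).comp_hasDerivAt x (hdg x)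
    -- first derivative of quadratic form
    have hφ : deriv (fun z => v t z ⬝ᵥ K.mulVec (v t z))
        = fun z => deriv (v t) z ⬝ᵥ K.mulVec (v t z) + v t z ⬝ᵥ K.mulVec (deriv (v t) z) :=
      funext fun z => (hasDerivAt_dotMul K (hdg z) (hdg z)).deriv
    have hφ2 : deriv (deriv (fun z => v t z ⬝ᵥ K.mulVec (v t z)))
        = fun z => (deriv (deriv (v t)) z ⬝ᵥ K.mulVec (v t z)
              + deriv (v t) z ⬝ᵥ K.mulVec (deriv (v t) z))
            + (deriv (v t) z ⬝ᵥ K.mulVec (deriv (v t) z)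
              + v t z ⬝ᵥ K.mulVec (deriv (deriv (v t)) z)) := by
      rw [hφ]
      exact funext fun z =>
        ((hasDerivAt_dotMul K (hdg1 z) (hdg z)).add (hasDerivAt_dotMul K (hdg z) (hdg1 z))).deriv
    rw [hφ2]
    -- derivative of the flux
    have hflux : HasDerivAt (fun y => Fstar (v t y)
            - ε * (v t y ⬝ᵥ B.mulVec (deriv (v t) y))
            + ε ^ 2 / 2 * (3 * (deriv (v t) y ⬝ᵥ K.mulVec (deriv (v t) y))
                - ((deriv (deriv (v t)) y ⬝ᵥ K.mulVec (v t y)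
                      + deriv (v t) y ⬝ᵥ K.mulVec (deriv (v t) y))
                    + (deriv (v t) y ⬝ᵥ K.mulVec (deriv (v t) y)
                      + v t y ⬝ᵥ K.mulVec (deriv (deriv (v t)) y)))))
        (fderiv ℝ Fstar w g1
          - ε * (g1 ⬝ᵥ B.mulVec g1 + w ⬝ᵥ B.mulVec g2)
          + ε ^ 2 / 2 * (3 * (g2 ⬝ᵥ K.mulVec g1 + g1 ⬝ᵥ K.mulVec g2)
              - (((g3 ⬝ᵥ K.mulVec w + g2 ⬝ᵥ K.mulVec g1)
                    + (g2 ⬝ᵥ K.mulVec g1 + g1 ⬝ᵥ K.mulVec g2))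
                  + ((g2 ⬝ᵥ K.mulVec g1 + g1 ⬝ᵥ K.mulVec g2)
                    + (g1 ⬝ᵥ K.mulVec g2 + w ⬝ᵥ K.mulVec g3))))) x := by
      refine (hF.sub ((hasDerivAt_dotMul B (hdg x) (hdg1 x)).const_mul ε)).add
        (HasDerivAt.const_mul _ (HasDerivAt.sub
          ((hasDerivAt_dotMul K (hdg1 x) (hdg1 x)).const_mul 3)
          (HasDerivAt.add
            ((hasDerivAt_dotMul K (hdg2 x) (hdg x)).add
              (hasDerivAt_dotMul K (hdg1 x) (hdg1 x)))
            ((hasDerivAt_dotMul K (hdg1 x) (hdg1 x)).add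
              (hasDerivAt_dotMul K (hdg x) (hdg2 x))))))
    rw [hU.deriv, hflux.deriv]
    -- use duality and PDE
    have hPD := hPDE t x
    rw [hu.deriv, hf2.deriv] at hPD
    have hUd : fderiv ℝ Ustar w vt = w ⬝ᵥ fderiv ℝ ustar w vt := hdualU w vt
    have hFd : fderiv ℝ Fstar w g1 = w ⬝ᵥ fderiv ℝ fstar w g1 := hdualF w g1
    have hsum : w ⬝ᵥ fderiv ℝ ustar w vt + w ⬝ᵥ fderiv ℝ fstar w g1
        = ε * (w ⬝ᵥ B.mulVec g2) + ε ^ 2 * (w ⬝ᵥ K.mulVec g3) := by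
      rw [← dotProduct_add, hPD]
      simp [dotProduct_add, dotProduct_smul, smul_eq_mul]
      rfl
    -- symmetry normalizations
    have s1 : g2 ⬝ᵥ K.mulVec g1 = g1 ⬝ᵥ K.mulVec g2 := dot_symm_helper hK g2 g1
    have s2 : g3 ⬝ᵥ K.mulVec w = w ⬝ᵥ K.mulVec g3 := dot_symm_helper hK g3 w
    have s3 : g1 ⬝ᵥ (B + Bᵀ).mulVec g1 = 2 * (g1 ⬝ᵥ B.mulVec g1) := by
      rw [Matrix.add_mulVec, dotProduct_add, dot_transpose_helper]
      ring
    rw [hUd, hFd, s1, s2, s3]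
    linarith [hsum]
  · intro hpsd t x
    have h0 := hpsd.dotProduct_mulVec_nonneg (deriv (v t) x)
    rw [star_trivial] at h0
    nlinarith [h0, hε.le]
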